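/- Let A be a finite abelian group (written additively) and let D ⊆ A be a difference set with |D| ≥ 3. Consider the incidence structure whose points are the elements of A and whose lines are indexed by the elements of A, a point x lying on the line indexed by b if and only if x − b ∈ D (so the lines are the translates b + D). Then: (1) for any two distinct points x, y ∈ A there is a unique b ∈ A such that both x and y lie on the line indexed by b; (2) for any two distinct indices b, b' ∈ A, the lines b + D and b' + D are distinct and meet in exactly one point; and (3) there exist four points in A no three of which lie on a common line. In particular this incidence structure is a projective plane. -/

import Mathlib

/-- A subset `D` of an additive group `A` is a difference set if every nonzero element
`a ∈ A` can be written in exactly one way as `a = d₁ − d₂` with `d₁, d₂ ∈ D`. -/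
def IsAddDifferenceSet {A : Type*} [AddGroup A] (D : Set A) : Prop :=
  ∀ a : A, a ≠ 0 → ∃! p : A × A, p.1 ∈ D ∧ p.2 ∈ D ∧ p.1 - p.2 = a

section Aux

variable {A : Type} [AddCommGroup A] {D : Set A}

/-- Any two distinct points lie on a unique line. -/
lemma ds_line (hD : IsAddDifferenceSet D) (x y : A) (hxy : x ≠ y) :
    ∃! b : A, x - b ∈ D ∧ y - b ∈ D := by
  obtain ⟨⟨d₁, d₂⟩, ⟨h1, h2, h3⟩, huniq⟩ := hD (x - y) (sub_ne_zero.2 hxy)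
  simp only at h1 h2 h3
  refine ⟨x - d₁, ⟨by simpa using h1, ?_⟩, ?_⟩
  · have hy : y - (x - d₁) = d₂ := by
      have : d₂ = d₁ - (x - y) := by rw [← h3]; abel
      rw [this]; abel
    rw [hy]; exact h2
  · intro b ⟨hb1, hb2⟩
    have h := huniq (x - b, y - b) ⟨hb1, hb2, by show x - b - (y - b) = x - y; abel⟩
    have h4 : x - b = d₁ := congrArg Prod.fst h
    rw [← h4]; abel

/-- Any two distinct lines meet in a unique point. -/
lemma ds_point (hD : IsAddDifferenceSet D) (b b' : A) (hbb : b ≠ b') :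
    ∃! x : A, x - b ∈ D ∧ x - b' ∈ D := by
  obtain ⟨⟨d₁, d₂⟩, ⟨h1, h2, h3⟩, huniq⟩ := hD (b' - b) (sub_ne_zero.2 (fun h => hbb h.symm))
  simp only at h1 h2 h3
  refine ⟨b + d₁, ⟨by simpa using h1, ?_⟩, ?_⟩
  · have hx : b + d₁ - b' = d₂ := by
      have : d₂ = d₁ - (b' - b) := by rw [← h3]; abel
      rw [this]; abel
    rw [hx]; exact h2
  · intro x ⟨hx1, hx2⟩
    have h := huniq (x - b, x - b') ⟨hx1, hx2, by show x - b - (x - b') = b' - b; abel⟩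
    have h4 : x - b = d₁ := congrArg Prod.fst h
    rw [← h4]; abel

lemma ds_line_unique (hD : IsAddDifferenceSet D) {x y l l' : A} (hxy : x ≠ y)
    (h1 : x - l ∈ D) (h2 : y - l ∈ D) (h3 : x - l' ∈ D) (h4 : y - l' ∈ D) : l = l' :=
  (ds_line hD x y hxy).unique ⟨h1, h2⟩ ⟨h3, h4⟩

lemma ds_point_unique (hD : IsAddDifferenceSet D) {b b' x y : A} (hbb : b ≠ b')
    (h1 : x - b ∈ D) (h2 : x - b' ∈ D) (h3 : y - b ∈ D) (h4 : y - b' ∈ D) : x = y :=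
  (ds_point hD b b' hbb).unique ⟨h1, h2⟩ ⟨h3, h4⟩

lemma ds_not_univ (hD : IsAddDifferenceSet D) {a : A} (ha : a ≠ 0) : ∃ c : A, c ∉ D := by
  by_contra h
  push_neg at h
  obtain ⟨p, _, hu⟩ := hD a ha
  have h1 := hu (a, 0) ⟨h _, h _, sub_zero a⟩
  have h2 := hu (a + a, a) ⟨h _, h _, add_sub_cancel_right a a⟩
  rw [← h2] at h1
  have : (0 : A) = a := congrArg Prod.snd h1
  exact ha this.symm

lemma exists_three [Finite A] (hcard : 3 ≤ Nat.card D) :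
    ∃ d₁ d₂ d₃ : A, d₁ ∈ D ∧ d₂ ∈ D ∧ d₃ ∈ D ∧ d₁ ≠ d₂ ∧ d₁ ≠ d₃ ∧ d₂ ≠ d₃ := by
  classical
  have hfin : D.Finite := Set.toFinite D
  set s := hfin.toFinset with hs
  have hcard' : 3 ≤ s.card := by
    rwa [Nat.card_coe_set_eq, Set.ncard_eq_toFinset_card D hfin] at hcard
  obtain ⟨a, ha⟩ := Finset.card_pos.mp (show 0 < s.card by omega)
  have h2 : 0 < (s.erase a).card := by
    rw [Finset.card_erase_of_mem ha]; omega
  obtain ⟨b, hb⟩ := Finset.card_pos.mp h2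
  have hbs : b ∈ s := Finset.mem_of_mem_erase hb
  have h3 : 0 < ((s.erase a).erase b).card := by
    rw [Finset.card_erase_of_mem hb, Finset.card_erase_of_mem ha]; omega
  obtain ⟨c, hc⟩ := Finset.card_pos.mp h3
  have hcs : c ∈ s := Finset.mem_of_mem_erase (Finset.mem_of_mem_erase hc)
  have hcb : c ≠ b := (Finset.mem_erase.mp hc).1
  have hca : c ≠ a := (Finset.mem_erase.mp (Finset.mem_of_mem_erase hc)).1
  have hba : b ≠ a := (Finset.mem_erase.mp hb).1
  exact ⟨a, b, c, hfin.mem_toFinset.mp ha, hfin.mem_toFinset.mp hbs, hfin.mem_toFinset.mp hcs,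
    fun h => hba h.symm, fun h => hca h.symm, fun h => hcb h.symm⟩

/-- Every line has a point distinct from two given points. -/
lemma ds_third_point {d₁ d₂ d₃ : A} (h1 : d₁ ∈ D) (h2 : d₂ ∈ D) (h3 : d₃ ∈ D)
    (h12 : d₁ ≠ d₂) (h13 : d₁ ≠ d₃) (h23 : d₂ ≠ d₃) (b Y Z : A) :
    ∃ p : A, p - b ∈ D ∧ p ≠ Y ∧ p ≠ Z := by
  classical
  set s : Finset A := {b + d₁, b + d₂, b + d₃} with hsdef
  set t : Finset A := {Y, Z} with htdef
  have hscard : s.card = 3 := by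
    rw [hsdef]
    rw [Finset.card_insert_of_notMem, Finset.card_insert_of_notMem, Finset.card_singleton]
    · simp only [Finset.mem_singleton]
      exact fun h => h23 (add_left_cancel h)
    · simp only [Finset.mem_insert, Finset.mem_singleton]
      rintro (h | h)
      · exact h12 (add_left_cancel h)
      · exact h13 (add_left_cancel h)
  have htcard : t.card ≤ 2 := by
    rw [htdef]
    exact (Finset.card_insert_le _ _).trans (by simp)
  have hne : (s \ t).Nonempty := by
    rw [Finset.nonempty_iff_ne_empty]
    intro h
    have hsub : s ⊆ t := Finset.sdiff_eq_empty_iff_subset.mp h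
    have := Finset.card_le_card hsub
    omega
  obtain ⟨p, hp⟩ := hne
  rw [Finset.mem_sdiff] at hp
  obtain ⟨hps, hpt⟩ := hp
  have hpt' : p ≠ Y ∧ p ≠ Z := by
    rw [htdef] at hpt
    simp only [Finset.mem_insert, Finset.mem_singleton] at hpt
    push_neg at hpt
    exact hpt
  refine ⟨p, ?_, hpt'.1, hpt'.2⟩
  rw [hsdef] at hps
  simp only [Finset.mem_insert, Finset.mem_singleton] at hps
  rcases hps with h | h | h <;> rw [h, add_sub_cancel_left] <;> assumption

end Aux

/-- A difference set `D` with `|D| ≥ 3` in a finite abelian group `A` yields a projective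
plane: points are elements of `A`, lines are the translates `b + D`, and a point `x` lies
on the line indexed by `b` iff `x − b ∈ D`.  Then (1) any two distinct points lie on a
unique common line, (2) any two distinct lines are distinct as sets and meet in exactly one
point, and (3) there exist four points no three of which are collinear.  In particular this
incidence structure is a projective plane. -/
theorem differenceSet_gives_projectivePlane
    (A : Type) [AddCommGroup A] [Finite A] (D : Set A)
    (hD : IsAddDifferenceSet D) (hcard : 3 ≤ Nat.card D) :
    (∀ x y : A, x ≠ y → ∃! b : A, x - b ∈ D ∧ y - b ∈ D) ∧
    (∀ b b' : A, b ≠ b' →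
      ({x : A | x - b ∈ D} ≠ {x : A | x - b' ∈ D}) ∧ (∃! x : A, x - b ∈ D ∧ x - b' ∈ D)) ∧
    (∃ p₁ p₂ p₃ p₄ : A, p₁ ≠ p₂ ∧ p₁ ≠ p₃ ∧ p₁ ≠ p₄ ∧ p₂ ≠ p₃ ∧ p₂ ≠ p₄ ∧ p₃ ≠ p₄ ∧
      ∀ b : A, ¬(p₁ - b ∈ D ∧ p₂ - b ∈ D ∧ p₃ - b ∈ D) ∧
               ¬(p₁ - b ∈ D ∧ p₂ - b ∈ D ∧ p₄ - b ∈ D) ∧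
               ¬(p₁ - b ∈ D ∧ p₃ - b ∈ D ∧ p₄ - b ∈ D) ∧
               ¬(p₂ - b ∈ D ∧ p₃ - b ∈ D ∧ p₄ - b ∈ D)) ∧
    Nonempty (@Configuration.ProjectivePlane A A ⟨fun b x => x - b ∈ D⟩) := by
  obtain ⟨d₁, d₂, d₃, hd₁, hd₂, hd₃, h12, h13, h23⟩ := exists_three hcard
  -- two distinct lines
  have hne0 : d₁ - d₂ ≠ 0 := sub_ne_zero.2 h12
  set b₀ : A := 0 with hb₀
  set b₁ : A := d₁ - d₂ with hb₁
  have hb01 : b₀ ≠ b₁ := fun h => hne0 h.symm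
  -- their intersection point
  obtain ⟨q, ⟨hq0, hq1⟩, _⟩ := ds_point hD b₀ b₁ hb01
  -- the four points
  obtain ⟨p₁, hp₁D, hp₁q, -⟩ := ds_third_point hd₁ hd₂ hd₃ h12 h13 h23 b₀ q q
  obtain ⟨p₂, hp₂D, hp₂q, hp₂p₁⟩ := ds_third_point hd₁ hd₂ hd₃ h12 h13 h23 b₀ q p₁
  obtain ⟨p₃, hp₃D, hp₃q, -⟩ := ds_third_point hd₁ hd₂ hd₃ h12 h13 h23 b₁ q q
  obtain ⟨p₄, hp₄D, hp₄q, hp₄p₃⟩ := ds_third_point hd₁ hd₂ hd₃ h12 h13 h23 b₁ q p₃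
  -- points on L₀ are not on L₁ unless equal to q
  have cross : ∀ x : A, x - b₀ ∈ D → x - b₁ ∈ D → x = q := fun x hx hx' =>
    ds_point_unique hD hb01 hx hx' hq0 hq1
  have hp₁p₃ : p₁ ≠ p₃ := fun h => hp₃q (cross p₃ (h ▸ hp₁D) hp₃D)
  have hp₁p₄ : p₁ ≠ p₄ := fun h => hp₄q (cross p₄ (h ▸ hp₁D) hp₄D)
  have hp₂p₃ : p₂ ≠ p₃ := fun h => hp₃q (cross p₃ (h ▸ hp₂D) hp₃D)
  have hp₂p₄ : p₂ ≠ p₄ := fun h => hp₄q (cross p₄ (h ▸ hp₂D) hp₄D)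
  have hp₁p₂ : p₁ ≠ p₂ := fun h => hp₂p₁ h.symm
  have hp₃p₄ : p₃ ≠ p₄ := fun h => hp₄p₃ h.symm
  refine ⟨ds_line hD, ?_, ?_, ?_⟩
  · -- part 2
    intro b b' hbb
    refine ⟨?_, ds_point hD b b' hbb⟩
    intro hset
    -- two distinct points on line b, both also on line b'
    have m1 : b + d₁ ∈ {x : A | x - b ∈ D} := by simpa using hd₁
    have m2 : b + d₂ ∈ {x : A | x - b ∈ D} := by simpa using hd₂
    have m1' : (b + d₁) - b' ∈ D := by have := hset ▸ m1; exact this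
    have m2' : (b + d₂) - b' ∈ D := by have := hset ▸ m2; exact this
    have : b + d₁ = b + d₂ :=
      ds_point_unique hD hbb (by simpa using hd₁) m1' (by simpa using hd₂) m2'
    exact h12 (add_left_cancel this)
  · -- part 3 : quadrilateral
    refine ⟨p₁, p₂, p₃, p₄, hp₁p₂, hp₁p₃, hp₁p₄, hp₂p₃, hp₂p₄, hp₃p₄, ?_⟩
    intro b
    refine ⟨?_, ?_, ?_, ?_⟩
    · rintro ⟨h1, h2, h3⟩
      have hb : b = b₀ := ds_line_unique hD hp₁p₂ h1 h2 hp₁D hp₂D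
      exact hp₃q (cross p₃ (hb ▸ h3) hp₃D)
    · rintro ⟨h1, h2, h3⟩
      have hb : b = b₀ := ds_line_unique hD hp₁p₂ h1 h2 hp₁D hp₂D
      exact hp₄q (cross p₄ (hb ▸ h3) hp₄D)
    · rintro ⟨h1, h2, h3⟩
      have hb : b = b₁ := ds_line_unique hD hp₃p₄ h2 h3 hp₃D hp₄D
      exact hp₁q (cross p₁ hp₁D (hb ▸ h1))
    · rintro ⟨h1, h2, h3⟩
      have hb : b = b₁ := ds_line_unique hD hp₃p₄ h2 h3 hp₃D hp₄D
      exact hp₂q (cross p₂ hp₂D (hb ▸ h1))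
  · -- the projective plane instance
    letI inst : Membership A A := ⟨fun b x => x - b ∈ D⟩
    obtain ⟨c, hc⟩ := ds_not_univ hD hne0
    -- triangle for exists_config: X, Y on line b₀, Z on line b₁ off q
    set X : A := b₀ + d₁ with hX
    set Y : A := b₀ + d₂ with hY
    have hXD : X - b₀ ∈ D := by simpa [hX] using hd₁
    have hYD : Y - b₀ ∈ D := by simpa [hY] using hd₂
    have hXY : X ≠ Y := fun h => h12 (add_left_cancel h)
    obtain ⟨Z, hZD, hZq, -⟩ := ds_third_point hd₁ hd₂ hd₃ h12 h13 h23 b₁ q q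
    have hZb₀ : Z - b₀ ∉ D := fun h => hZq (cross Z h hZD)
    have hXZ : X ≠ Z := fun h => hZb₀ (h ▸ hXD)
    have hYZ : Y ≠ Z := fun h => hZb₀ (h ▸ hYD)
    obtain ⟨l₁, ⟨hYl₁, hZl₁⟩, -⟩ := ds_line hD Y Z hYZ
    obtain ⟨l₃, ⟨hXl₃, hZl₃⟩, -⟩ := ds_line hD X Z hXZ
    have hl₁b₀ : l₁ ≠ b₀ := by
      intro h
      exact hZb₀ (h ▸ hZl₁)
    have hl₃b₀ : l₃ ≠ b₀ := by
      intro h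
      exact hZb₀ (h ▸ hZl₃)
    have hXl₁ : X - l₁ ∉ D := fun h =>
      hl₁b₀ (ds_line_unique hD hXY h hYl₁ hXD hYD)
    obtain ⟨r₃, hr₃D, hr₃X, hr₃Y⟩ := ds_third_point hd₁ hd₂ hd₃ h12 h13 h23 b₀ X Y
    obtain ⟨r₁, hr₁D, hr₁Y, hr₁Z⟩ := ds_third_point hd₁ hd₂ hd₃ h12 h13 h23 l₁ Y Z
    have hr₃l₁ : r₃ - l₁ ∉ D := fun h =>
      hl₁b₀ (ds_line_unique hD hr₃Y h hYl₁ hr₃D hYD)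
    have hr₃l₃ : r₃ - l₃ ∉ D := fun h =>
      hl₃b₀ (ds_line_unique hD hr₃X h hXl₃ hr₃D hXD)
    have hr₁b₀ : r₁ - b₀ ∉ D := fun h =>
      hl₁b₀ (ds_line_unique hD hr₁Y hr₁D hYl₁ h hYD)
    have hr₁l₃ : r₁ - l₃ ∉ D := fun h => by
      have : l₁ = l₃ := ds_line_unique hD hr₁Z hr₁D hZl₁ h hZl₃
      exact hXl₁ (this ▸ hXl₃)
    refine ⟨?_⟩
    exact {
      exists_point := fun l => ⟨l + c, by
        show (l + c) - l ∈ D → False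
        intro h
        rw [add_sub_cancel_left] at h
        exact hc h⟩
      exists_line := fun p => ⟨p - c, by
        show p - (p - c) ∈ D → False
        intro h
        rw [sub_sub_cancel] at h
        exact hc h⟩
      eq_or_eq := by
        intro x y l l' h1 h2 h3 h4
        by_cases hxy : x = y
        · exact Or.inl hxy
        · exact Or.inr (ds_line_unique hD hxy h1 h2 h3 h4)
      mkPoint := fun {l l'} h => (ds_point hD l l' h).exists.choose
      mkPoint_ax := fun {l l'} h => (ds_point hD l l' h).exists.choose_spec
      mkLine := fun {x y} h => (ds_line hD x y h).exists.choose
      mkLine_ax := fun {x y} h => (ds_line hD x y h).exists.choose_spec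
      exists_config :=
        ⟨r₁, X, r₃, l₁, b₀, l₃, hr₁b₀, hr₁l₃, hXl₁, hXD, hXl₃, hr₃l₁, hr₃D, hr₃l₃⟩
    }
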